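/- Let T be a κ-strict pseudo-contraction on C and (xₙ) the Mann iteration with step sizes (λₙ) in (0,1). Then for all y ∈ C and n ≥ 0: ‖x_{n+1} - y‖² ≤ ‖xₙ - y‖² - (λₙ - κ)(1 - λₙ)‖xₙ - Txₙ‖² + 2‖y - Ty‖(‖xₙ - y‖ + 2‖y - Ty‖). -/

import Mathlib

private theorem aux_key {H : Type*} [NormedAddCommGroup H] [InnerProductSpace ℝ H]
    (a w p : H) (κ l : ℝ) (hκ0 : 0 ≤ κ) (hκ1 : κ < 1) (hl0 : 0 < l) (hl1 : l < 1)
    (hcon : ‖a - (w - p)‖ ^ 2 ≤ ‖a‖ ^ 2 + κ * ‖w - p‖ ^ 2) :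
    ‖a - (1 - l) • w‖ ^ 2 ≤ ‖a‖ ^ 2 - (l - κ) * (1 - l) * ‖w‖ ^ 2
      + 2 * ‖p‖ * (‖a‖ + 2 * ‖p‖) := by
  set q : H := w - p with hq
  have hwqp : w = q + p := by rw [hq]; abel
  have e0 : ‖a - q‖ ^ 2 = ‖a‖ ^ 2 - 2 * (inner ℝ a q : ℝ) + ‖q‖ ^ 2 :=
    norm_sub_sq_real a q
  have hc : (1 - κ) * ‖q‖ ^ 2 ≤ 2 * (inner ℝ a q : ℝ) := by nlinarith
  have h1 : ‖(1 - κ) • q - a‖ ^ 2 ≤ ‖a‖ ^ 2 := by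
    have e1 : ‖(1 - κ) • q - a‖ ^ 2
        = ‖(1 - κ) • q‖ ^ 2 - 2 * (inner ℝ ((1 - κ) • q) a : ℝ) + ‖a‖ ^ 2 :=
      norm_sub_sq_real _ _
    rw [norm_smul, real_inner_smul_left] at e1
    have habs : ‖(1 - κ)‖ = 1 - κ := by
      rw [Real.norm_eq_abs, abs_of_nonneg (by linarith)]
    rw [habs] at e1
    have hsym : (inner ℝ q a : ℝ) = (inner ℝ a q : ℝ) := real_inner_comm a q
    rw [hsym] at e1
    nlinarith
  have h1' : ‖(1 - κ) • q - a‖ ≤ ‖a‖ := by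
    nlinarith [norm_nonneg ((1 - κ) • q - a), norm_nonneg a]
  have hB : 2 * (inner ℝ ((1 - κ) • q - a) p : ℝ) ≤ 2 * ‖a‖ * ‖p‖ := by
    have h2 := real_inner_le_norm ((1 - κ) • q - a) p
    nlinarith [norm_nonneg p]
  have key : (1 - κ) * ‖w‖ ^ 2 - 2 * (inner ℝ a w : ℝ)
      ≤ 2 * ‖a‖ * ‖p‖ + (1 - κ) * ‖p‖ ^ 2 := by
    have e2 : ‖w‖ ^ 2 = ‖q‖ ^ 2 + 2 * (inner ℝ q p : ℝ) + ‖p‖ ^ 2 := by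
      rw [hwqp]; exact norm_add_sq_real q p
    have e3 : (inner ℝ a w : ℝ) = (inner ℝ a q : ℝ) + (inner ℝ a p : ℝ) := by
      rw [hwqp, inner_add_right]
    have e4 : (inner ℝ ((1 - κ) • q - a) p : ℝ)
        = (1 - κ) * (inner ℝ q p : ℝ) - (inner ℝ a p : ℝ) := by
      rw [inner_sub_left, real_inner_smul_left]
    rw [e2, e3]
    rw [e4] at hB
    linarith
  have e5 : ‖a - (1 - l) • w‖ ^ 2
      = ‖a‖ ^ 2 - 2 * ((1 - l) * (inner ℝ a w : ℝ)) + (1 - l) ^ 2 * ‖w‖ ^ 2 := by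
    have := norm_sub_sq_real a ((1 - l) • w)
    rw [real_inner_smul_right, norm_smul, Real.norm_eq_abs,
      abs_of_nonneg (by linarith : (0:ℝ) ≤ 1 - l)] at this
    rw [this]; ring
  rw [e5]
  have h2 : (1 - l) * ((1 - κ) * ‖w‖ ^ 2 - 2 * (inner ℝ a w : ℝ))
      ≤ (1 - l) * (2 * ‖a‖ * ‖p‖ + (1 - κ) * ‖p‖ ^ 2) :=
    mul_le_mul_of_nonneg_left key (by linarith)
  have hap : 0 ≤ ‖a‖ * ‖p‖ := mul_nonneg (norm_nonneg a) (norm_nonneg p)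
  have hp2 : (0:ℝ) ≤ ‖p‖ ^ 2 := sq_nonneg _
  have hB0 : (0:ℝ) ≤ 2 * ‖a‖ * ‖p‖ + (1 - κ) * ‖p‖ ^ 2 := by nlinarith
  have h3 : (1 - l) * (2 * ‖a‖ * ‖p‖ + (1 - κ) * ‖p‖ ^ 2)
      ≤ 2 * ‖a‖ * ‖p‖ + (1 - κ) * ‖p‖ ^ 2 := by nlinarith [mul_nonneg hl0.le hB0]
  nlinarith [h2, h3]

theorem stmt_2 {H : Type*} [NormedAddCommGroup H] [InnerProductSpace ℝ H]
    (C : Set H) (hCne : C.Nonempty) (hCconv : Convex ℝ C)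
    (κ : ℝ) (hκ0 : 0 ≤ κ) (hκ1 : κ < 1)
    (T : H → H) (hTmap : Set.MapsTo T C C)
    (hT : ∀ u ∈ C, ∀ v ∈ C,
      ‖T u - T v‖ ^ 2 ≤ ‖u - v‖ ^ 2 + κ * ‖(u - T u) - (v - T v)‖ ^ 2)
    (lam : ℕ → ℝ) (hlam : ∀ n, lam n ∈ Set.Ioo (0:ℝ) 1)
    (x : ℕ → H) (hx0 : x 0 ∈ C)
    (hxrec : ∀ n, x (n + 1) = lam n • x n + (1 - lam n) • T (x n)) :
    ∀ y ∈ C, ∀ n : ℕ,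
      ‖x (n + 1) - y‖ ^ 2
        ≤ ‖x n - y‖ ^ 2 - (lam n - κ) * (1 - lam n) * ‖x n - T (x n)‖ ^ 2
          + 2 * ‖y - T y‖ * (‖x n - y‖ + 2 * ‖y - T y‖) := by
  intro y hy n
  have hmem : ∀ m, x m ∈ C := by
    intro m
    induction m with
    | zero => exact hx0
    | succ k ih =>
      rw [hxrec k]
      exact hCconv ih (hTmap ih) (le_of_lt (hlam k).1)
        (by linarith [(hlam k).2]) (by ring)
  have hcon : ‖(x n - y) - ((x n - T (x n)) - (y - T y))‖ ^ 2
      ≤ ‖x n - y‖ ^ 2 + κ * ‖(x n - T (x n)) - (y - T y)‖ ^ 2 := by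
    have habel : (x n - y) - ((x n - T (x n)) - (y - T y)) = T (x n) - T y := by
      abel
    rw [habel]
    exact hT (x n) (hmem n) y hy
  have := aux_key (x n - y) (x n - T (x n)) (y - T y) κ (lam n) hκ0 hκ1
    (hlam n).1 (hlam n).2 hcon
  have heq : x (n + 1) - y = (x n - y) - (1 - lam n) • (x n - T (x n)) := by
    rw [hxrec n]
    module
  rw [heq]
  exact this
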